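/- Let 1 ≤ p, q ≤ ∞ and suppose there is a constant C such that ‖M_{ℍ¹}f‖_{L^q(ℝ³)} ≤ C‖f‖_{L^p(ℝ³)} holds for every Heisenberg radial function f ∈ L^p. Then necessarily p ≤ q, 1 + 1/q ≥ 3/p, and 3/q ≥ 2/p; that is, (1/p,1/q) lies in the closed triangle T with vertices (0,0), (1/2,1/2), (3/7,2/7). -/

import Mathlib

set_option maxHeartbeats 1000000


open MeasureTheory Real Set
open scoped ENNReal

noncomputable section

/-- The spherical average on the Heisenberg group ℍ¹ = ℝ²×ℝ:
`f ∗_ℍ dσ_t(x,x₃) = ∫_{𝕊¹} f(x−ty, x₃−t x·Ay) dσ(y)` where `A` has rows `(0,−1),(1,0)`,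
the circle being parametrized by arclength. -/
def heisAvg (f : ℝ × ℝ × ℝ → ℂ) (t : ℝ) (x : ℝ × ℝ × ℝ) : ℂ :=
  ∫ θ in Set.Ioc (0:ℝ) (2 * π),
    f (x.1 - t * Real.cos θ, x.2.1 - t * Real.sin θ,
       x.2.2 - t * (x.1 * (-Real.sin θ) + x.2.1 * Real.cos θ))

/-- A function on ℍ¹ is Heisenberg radial if `f(Rx,x₃) = f(x,x₃)` for every rotation
`R ∈ SO(2)` (parametrized by its angle). -/
def HeisRadial (f : ℝ × ℝ × ℝ → ℂ) : Prop :=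
  ∀ α : ℝ, ∀ x : ℝ × ℝ × ℝ,
    f (Real.cos α * x.1 - Real.sin α * x.2.1,
       Real.sin α * x.1 + Real.cos α * x.2.1, x.2.2) = f x

/-- The local spherical maximal function `M_{ℍ¹} f = sup_{1<t<2} |f ∗_ℍ dσ_t|`. -/
def heisMax (f : ℝ × ℝ × ℝ → ℂ) (x : ℝ × ℝ × ℝ) : ℝ :=
  ⨆ t ∈ Set.Ioo (1:ℝ) 2, ‖heisAvg f t x‖

/-! ### Infrastructure -/

/-- The point on the twisted circle. -/
def heisPt (t : ℝ) (x : ℝ × ℝ × ℝ) (θ : ℝ) : ℝ × ℝ × ℝ :=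
  (x.1 - t * Real.cos θ, x.2.1 - t * Real.sin θ,
   x.2.2 - t * (x.1 * (-Real.sin θ) + x.2.1 * Real.cos θ))

lemma measurable_heisPt (t : ℝ) (x : ℝ × ℝ × ℝ) : Measurable (heisPt t x) := by
  unfold heisPt; fun_prop

lemma heisAvg_indicator {E : Set (ℝ × ℝ × ℝ)} (hE : MeasurableSet E) (t : ℝ) (x : ℝ × ℝ × ℝ) :
    heisAvg (E.indicator fun _ => (1:ℂ)) t x
      = ((volume (Set.Ioc (0:ℝ) (2*π) ∩ heisPt t x ⁻¹' E)).toReal : ℂ) := by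
  have h1 : (fun θ => (E.indicator fun _ => (1:ℂ)) (heisPt t x θ))
      = (heisPt t x ⁻¹' E).indicator (fun _ => (1:ℂ)) := by
    funext θ
    by_cases h : heisPt t x θ ∈ E <;> simp [Set.indicator_apply, h]
  have : heisAvg (E.indicator fun _ => (1:ℂ)) t x
      = ∫ θ in Set.Ioc (0:ℝ) (2*π), (heisPt t x ⁻¹' E).indicator (fun _ => (1:ℂ)) θ := by
    unfold heisAvg
    rw [← h1]
    rfl
  rw [this, MeasureTheory.setIntegral_indicator (measurable_heisPt t x hE),
    MeasureTheory.setIntegral_const]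
  simp [Complex.real_smul]
  rfl

lemma norm_heisAvg_indicator {E : Set (ℝ × ℝ × ℝ)} (hE : MeasurableSet E) (t : ℝ)
    (x : ℝ × ℝ × ℝ) :
    ‖heisAvg (E.indicator fun _ => (1:ℂ)) t x‖
      = (volume (Set.Ioc (0:ℝ) (2*π) ∩ heisPt t x ⁻¹' E)).toReal := by
  rw [heisAvg_indicator hE, Complex.norm_real, Real.norm_eq_abs,
    abs_of_nonneg ENNReal.toReal_nonneg]

lemma le_heisMax {E : Set (ℝ × ℝ × ℝ)} (hE : MeasurableSet E) {t : ℝ}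
    (ht : t ∈ Set.Ioo (1:ℝ) 2) (x : ℝ × ℝ × ℝ) :
    (volume (Set.Ioc (0:ℝ) (2*π) ∩ heisPt t x ⁻¹' E)).toReal
      ≤ heisMax (E.indicator fun _ => (1:ℂ)) x := by
  set f := E.indicator fun _ => (1:ℂ) with hf
  have hval : ∀ t' : ℝ, ‖heisAvg f t' x‖
      = (volume (Set.Ioc (0:ℝ) (2*π) ∩ heisPt t' x ⁻¹' E)).toReal := fun t' =>
    norm_heisAvg_indicator hE t' x
  have hle2pi : ∀ t' : ℝ, ‖heisAvg f t' x‖ ≤ 2*π := by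
    intro t'
    rw [hval t']
    have hmono : volume (Set.Ioc (0:ℝ) (2*π) ∩ heisPt t' x ⁻¹' E)
        ≤ volume (Set.Ioc (0:ℝ) (2*π)) := measure_mono Set.inter_subset_left
    have h2 : volume (Set.Ioc (0:ℝ) (2*π)) = ENNReal.ofReal (2*π) := by
      rw [Real.volume_Ioc, sub_zero]
    calc (volume (Set.Ioc (0:ℝ) (2*π) ∩ heisPt t' x ⁻¹' E)).toReal
        ≤ (volume (Set.Ioc (0:ℝ) (2*π))).toReal := by
          apply ENNReal.toReal_mono _ hmono
          rw [h2]; exact ENNReal.ofReal_ne_top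
      _ = 2*π := by rw [h2, ENNReal.toReal_ofReal (by positivity)]
  have hbound : ∀ t' : ℝ, (⨆ _ : t' ∈ Set.Ioo (1:ℝ) 2, ‖heisAvg f t' x‖) ≤ 2*π := by
    intro t'
    by_cases h : t' ∈ Set.Ioo (1:ℝ) 2
    · haveI : Nonempty (t' ∈ Set.Ioo (1:ℝ) 2) := ⟨h⟩
      rw [ciSup_const]
      exact hle2pi t'
    · haveI : IsEmpty (t' ∈ Set.Ioo (1:ℝ) 2) := isEmpty_Prop.mpr h
      rw [Real.iSup_of_isEmpty]
      positivity
  have hbdd : BddAbove (Set.range fun t' => ⨆ _ : t' ∈ Set.Ioo (1:ℝ) 2, ‖heisAvg f t' x‖) := by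
    refine ⟨2*π, ?_⟩
    rintro y ⟨t', rfl⟩
    exact hbound t'
  have hstep : (⨆ _ : t ∈ Set.Ioo (1:ℝ) 2, ‖heisAvg f t x‖) ≤ heisMax f x := le_ciSup hbdd t
  haveI : Nonempty (t ∈ Set.Ioo (1:ℝ) 2) := ⟨ht⟩
  rw [ciSup_const] at hstep
  rw [← hval t]
  exact hstep

lemma vol_box (a b c d e f : ℝ) :
    volume (Set.Icc a b ×ˢ Set.Icc c d ×ˢ Set.Icc e f)
      = ENNReal.ofReal (b-a) * (ENNReal.ofReal (d-c) * ENNReal.ofReal (f-e)) := by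
  rw [MeasureTheory.Measure.volume_eq_prod, Measure.prod_prod,
    MeasureTheory.Measure.volume_eq_prod, Measure.prod_prod,
    Real.volume_Icc, Real.volume_Icc, Real.volume_Icc]

/-- Extract a real inequality from the `L^p → L^q` bound, applied to an indicator. -/
lemma core_ineq (p q : ℝ≥0∞) (hq : 1 ≤ q) (C : ℝ)
    (hbdd : ∀ f : ℝ × ℝ × ℝ → ℂ, MemLp f p volume → HeisRadial f →
      eLpNorm (heisMax f) q volume ≤ ENNReal.ofReal C * eLpNorm f p volume)
    (E G : Set (ℝ × ℝ × ℝ)) (hE : MeasurableSet E) (hG : MeasurableSet G)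
    (hrad : ∀ (α : ℝ) (x : ℝ × ℝ × ℝ),
      (Real.cos α * x.1 - Real.sin α * x.2.1,
       Real.sin α * x.1 + Real.cos α * x.2.1, x.2.2) ∈ E ↔ x ∈ E)
    (V g c : ℝ) (hV : 0 < V) (hg : 0 < g) (hc : 0 < c)
    (hEV : volume E ≤ ENNReal.ofReal V) (hGg : volume G = ENNReal.ofReal g)
    (hlow : ∀ x ∈ G, c ≤ heisMax (E.indicator fun _ => (1:ℂ)) x) :
    c * g ^ (1/q.toReal) ≤ (|C|+1) * V ^ (1/p.toReal) := by
  set f := E.indicator fun _ => (1:ℂ) with hfdef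
  have hq0 : q ≠ 0 := (lt_of_lt_of_le zero_lt_one hq).ne'
  have hmem : MemLp f p volume :=
    memLp_indicator_const p hE 1 (Or.inr (lt_of_le_of_lt hEV ENNReal.ofReal_lt_top).ne)
  have hradf : HeisRadial f := by
    intro α x
    classical
    simp only [hfdef]
    rw [Set.indicator_apply, Set.indicator_apply]
    exact if_congr (hrad α x) rfl rfl
  have heLp := hbdd f hmem hradf
  have h1 : eLpNorm (G.indicator fun _ => (c:ℝ)) q volume ≤ eLpNorm (heisMax f) q volume := by
    apply eLpNorm_mono
    intro x
    by_cases hx : x ∈ G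
    · rw [Set.indicator_of_mem hx, Real.norm_eq_abs, Real.norm_eq_abs, abs_of_pos hc]
      exact le_trans (hlow x hx) (le_abs_self _)
    · rw [Set.indicator_of_notMem hx]
      simpa using norm_nonneg _
  have h2 : eLpNorm (G.indicator fun _ => (c:ℝ)) q volume
      = ENNReal.ofReal c * ENNReal.ofReal g ^ (1/q.toReal) := by
    rw [eLpNorm_indicator_const' hG
      (by rw [hGg]; exact (ENNReal.ofReal_pos.mpr hg).ne') hq0, hGg,
      Real.enorm_eq_ofReal hc.le]
  have h3 : eLpNorm f p volume ≤ ENNReal.ofReal V ^ (1/p.toReal) := by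
    calc eLpNorm f p volume ≤ (‖(1:ℂ)‖₊ : ℝ≥0∞) * volume E ^ (1/p.toReal) :=
          eLpNorm_indicator_const_le _ _
      _ = volume E ^ (1/p.toReal) := by simp
      _ ≤ ENNReal.ofReal V ^ (1/p.toReal) := ENNReal.rpow_le_rpow hEV (by positivity)
  have hCC : ENNReal.ofReal C ≤ ENNReal.ofReal (|C|+1) :=
    ENNReal.ofReal_le_ofReal (by linarith [le_abs_self C])
  have key : ENNReal.ofReal (c * g ^ (1/q.toReal))
      ≤ ENNReal.ofReal ((|C|+1) * V ^ (1/p.toReal)) := by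
    calc ENNReal.ofReal (c * g ^ (1/q.toReal))
        = ENNReal.ofReal c * ENNReal.ofReal g ^ (1/q.toReal) := by
          rw [ENNReal.ofReal_mul hc.le, ENNReal.ofReal_rpow_of_pos hg]
      _ ≤ eLpNorm (heisMax f) q volume := h2 ▸ h1
      _ ≤ ENNReal.ofReal C * eLpNorm f p volume := heLp
      _ ≤ ENNReal.ofReal (|C|+1) * ENNReal.ofReal V ^ (1/p.toReal) :=
          mul_le_mul' hCC h3
      _ = ENNReal.ofReal ((|C|+1) * V ^ (1/p.toReal)) := by
          rw [ENNReal.ofReal_mul (by positivity), ENNReal.ofReal_rpow_of_pos hV]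
  exact (ENNReal.ofReal_le_ofReal_iff (by positivity)).mp key

/-! ### Exponent extraction -/

lemma rpow_dom {K K' u v R0 : ℝ} (hK : 0 < K) (hK' : 0 < K') (hR0 : 1 ≤ R0)
    (h : ∀ R, R0 ≤ R → K * R ^ u ≤ K' * R ^ v) : u ≤ v := by
  by_contra hlt
  push_neg at hlt
  have hw : 0 < u - v := by linarith
  have hbd : ∀ R, R0 ≤ R → R ^ (u - v) ≤ K' / K := by
    intro R hR
    have hRpos : 0 < R := lt_of_lt_of_le zero_lt_one (le_trans hR0 hR)
    have hRv : 0 < R ^ v := Real.rpow_pos_of_pos hRpos v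
    have h3 : R ^ u / R ^ v = R ^ (u - v) := by
      rw [← Real.rpow_sub hRpos]
    rw [← h3, div_le_div_iff₀ hRv hK]
    nlinarith [h R hR]
  set S := (K' / K + 1) ^ (1 / (u - v)) with hS
  have hKKpos : 0 < K' / K := div_pos hK' hK
  have hSpos : 0 < S := Real.rpow_pos_of_pos (by linarith) _
  set R := max R0 S with hR
  have hRR0 : R0 ≤ R := le_max_left _ _
  have hRS : S ≤ R := le_max_right _ _
  have hcontr : R ^ (u - v) ≥ K' / K + 1 := by
    calc R ^ (u - v) ≥ S ^ (u - v) :=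
          Real.rpow_le_rpow hSpos.le hRS hw.le
      _ = K' / K + 1 := by
          rw [hS, ← Real.rpow_mul (by linarith), one_div, inv_mul_cancel₀ hw.ne', Real.rpow_one]
  have := hbd R hRR0
  linarith

lemma exp_large {c k1 k2 C' a b u v R0 : ℝ} (hc : 0 < c) (hk1 : 0 < k1) (hk2 : 0 < k2)
    (hC' : 0 < C') (ha : 0 ≤ a) (hb : 0 ≤ b) (hR0 : 1 ≤ R0)
    (h : ∀ R, R0 ≤ R → c * (k1 * R ^ u) ^ b ≤ C' * (k2 * R ^ v) ^ a) : u * b ≤ v * a := by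
  apply rpow_dom (K := c * k1 ^ b) (K' := C' * k2 ^ a) (R0 := R0)
    (by positivity) (by positivity) hR0
  intro R hR
  have hRpos : 0 < R := lt_of_lt_of_le zero_lt_one (le_trans hR0 hR)
  have h1 : (k1 * R ^ u) ^ b = k1 ^ b * R ^ (u * b) := by
    rw [Real.mul_rpow hk1.le (Real.rpow_pos_of_pos hRpos u).le, ← Real.rpow_mul hRpos.le]
  have h2 : (k2 * R ^ v) ^ a = k2 ^ a * R ^ (v * a) := by
    rw [Real.mul_rpow hk2.le (Real.rpow_pos_of_pos hRpos v).le, ← Real.rpow_mul hRpos.le]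
  have := h R hR
  rw [h1, h2] at this
  calc c * k1 ^ b * R ^ (u * b) = c * (k1 ^ b * R ^ (u * b)) := by ring
    _ ≤ C' * (k2 ^ a * R ^ (v * a)) := this
    _ = C' * k2 ^ a * R ^ (v * a) := by ring

lemma exp_small {c k1 k2 C' a b w u v d0 : ℝ} (hc : 0 < c) (hk1 : 0 < k1) (hk2 : 0 < k2)
    (hC' : 0 < C') (ha : 0 ≤ a) (hb : 0 ≤ b) (hd0 : 0 < d0)
    (h : ∀ δ, 0 < δ → δ ≤ d0 → c * δ ^ w * (k1 * δ ^ u) ^ b ≤ C' * (k2 * δ ^ v) ^ a) :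
    v * a ≤ w + u * b := by
  have key : ∀ R, max 1 d0⁻¹ ≤ R →
      (c * k1 ^ b) * R ^ (-(w + u * b)) ≤ (C' * k2 ^ a) * R ^ (-(v * a)) := by
    intro R hR
    have hRpos : 0 < R := lt_of_lt_of_le zero_lt_one (le_trans (le_max_left _ _) hR)
    set δ := R⁻¹ with hδ
    have hδpos : 0 < δ := inv_pos.mpr hRpos
    have hδle : δ ≤ d0 := by
      rw [hδ, inv_le_comm₀ hRpos hd0]
      exact le_trans (le_max_right _ _) hR
    have hmain := h δ hδpos hδle
    have hpow : ∀ e : ℝ, δ ^ e = R ^ (-e) := by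
      intro e
      rw [hδ, Real.inv_rpow hRpos.le, ← Real.rpow_neg hRpos.le]
    rw [hpow w, hpow u, hpow v] at hmain
    have h1 : (k1 * R ^ (-u)) ^ b = k1 ^ b * R ^ (-u * b) := by
      rw [Real.mul_rpow hk1.le (Real.rpow_pos_of_pos hRpos _).le, ← Real.rpow_mul hRpos.le]
    have h2 : (k2 * R ^ (-v)) ^ a = k2 ^ a * R ^ (-v * a) := by
      rw [Real.mul_rpow hk2.le (Real.rpow_pos_of_pos hRpos _).le, ← Real.rpow_mul hRpos.le]
    rw [h1, h2] at hmain
    have hsplit : R ^ (-(w + u * b)) = R ^ (-w) * R ^ (-u * b) := by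
      rw [← Real.rpow_add hRpos]; ring_nf
    rw [hsplit]
    have hva : R ^ (-(v*a)) = R ^ (-v*a) := by ring_nf
    rw [hva]
    calc c * k1 ^ b * (R ^ (-w) * R ^ (-u * b))
        = c * R ^ (-w) * (k1 ^ b * R ^ (-u * b)) := by ring
      _ ≤ C' * (k2 ^ a * R ^ (-v * a)) := hmain
      _ = C' * k2 ^ a * R ^ (-v * a) := by ring
  have := rpow_dom (K := c * k1 ^ b) (K' := C' * k2 ^ a) (R0 := max 1 d0⁻¹)
    (by positivity) (by positivity) (le_max_left _ _) key
  linarith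

/-! ### Planar annulus volume -/

lemma annulus_vol {A B : ℝ} (hA : 0 ≤ A) (hAB : A ≤ B) :
    volume {w : ℝ × ℝ | A^2 ≤ w.1^2 + w.2^2 ∧ w.1^2 + w.2^2 ≤ B^2}
      ≤ ENNReal.ofReal (π * (B^2 - A^2)) := by
  have hB : 0 ≤ B := le_trans hA hAB
  set S : Set (ℝ × ℝ) := {w | A^2 ≤ w.1^2 + w.2^2 ∧ w.1^2 + w.2^2 ≤ B^2} with hSdef
  have hSm : MeasurableSet S := by
    rw [hSdef, Set.setOf_and]
    exact (measurableSet_le measurable_const (by fun_prop)).inter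
      (measurableSet_le (by fun_prop) measurable_const)
  have hpre : volume (Complex.measurableEquivRealProd ⁻¹' S) = volume S :=
    Complex.volume_preserving_equiv_real_prod.measure_preimage hSm.nullMeasurableSet
  have hsub : Complex.measurableEquivRealProd ⁻¹' S
      ⊆ Metric.closedBall 0 B \ Metric.ball 0 A := by
    intro z hz
    rw [Set.mem_preimage, Complex.measurableEquivRealProd_apply] at hz
    obtain ⟨hz1, hz2⟩ := hz
    have habs : ‖z‖^2 = z.re^2 + z.im^2 := by
      rw [Complex.sq_norm, Complex.normSq_apply]; ring
    have habsnn : 0 ≤ ‖z‖ := norm_nonneg z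
    constructor
    · rw [Metric.mem_closedBall, Complex.dist_eq, sub_zero]
      nlinarith [hz2, habs]
    · rw [Metric.mem_ball, Complex.dist_eq, sub_zero]
      push_neg
      nlinarith [hz1, habs]
  have hballsub : Metric.ball (0:ℂ) A ⊆ Metric.closedBall 0 B :=
    Metric.ball_subset_closedBall.trans (Metric.closedBall_subset_closedBall hAB)
  have hballfin : volume (Metric.ball (0:ℂ) A) ≠ ⊤ := by
    rw [Complex.volume_ball]
    exact ENNReal.mul_ne_top (by simp) ENNReal.coe_ne_top
  have hpi : (NNReal.pi : ℝ≥0∞) = ENNReal.ofReal π := by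
    rw [← NNReal.coe_real_pi, ENNReal.ofReal_coe_nnreal]
  calc volume S = volume (Complex.measurableEquivRealProd ⁻¹' S) := hpre.symm
    _ ≤ volume (Metric.closedBall (0:ℂ) B \ Metric.ball 0 A) := measure_mono hsub
    _ = volume (Metric.closedBall (0:ℂ) B) - volume (Metric.ball (0:ℂ) A) :=
        measure_diff hballsub measurableSet_ball.nullMeasurableSet hballfin
    _ = ENNReal.ofReal (B^2 * π) - ENNReal.ofReal (A^2 * π) := by
        rw [Complex.volume_closedBall, Complex.volume_ball, hpi,
          ← ENNReal.ofReal_pow hB, ← ENNReal.ofReal_pow hA,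
          ← ENNReal.ofReal_mul (by positivity), ← ENNReal.ofReal_mul (by positivity)]
    _ = ENNReal.ofReal (π * (B^2 - A^2)) := by
        rw [← ENNReal.ofReal_sub _ (by positivity)]
        congr 1
        ring

lemma vol_cond_prod {P : ℝ × ℝ → Prop} (hP : MeasurableSet {w : ℝ × ℝ | P w}) (a b : ℝ) :
    volume {v : ℝ × ℝ × ℝ | P (v.1, v.2.1) ∧ v.2.2 ∈ Set.Icc a b}
      = volume {w : ℝ × ℝ | P w} * ENNReal.ofReal (b - a) := by
  have hW : MeasurableSet {v : ℝ × ℝ × ℝ | P (v.1, v.2.1) ∧ v.2.2 ∈ Set.Icc a b} := by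
    have h1 : Measurable (fun v : ℝ × ℝ × ℝ => (v.1, v.2.1)) := by fun_prop
    have h2 : Measurable (fun v : ℝ × ℝ × ℝ => v.2.2) := by fun_prop
    exact (hP.preimage h1).inter (measurableSet_Icc.preimage h2)
  rw [MeasureTheory.Measure.volume_eq_prod, Measure.prod_apply hW]
  have hslice : ∀ x1 : ℝ, (Prod.mk x1 ⁻¹' {v : ℝ × ℝ × ℝ | P (v.1, v.2.1) ∧ v.2.2 ∈ Set.Icc a b})
      = {y : ℝ | P (x1, y)} ×ˢ Set.Icc a b := by
    intro x1
    ext ⟨y, z⟩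
    simp [Set.mem_prod]
  calc ∫⁻ x, volume (Prod.mk x ⁻¹' {v : ℝ × ℝ × ℝ | P (v.1, v.2.1) ∧ v.2.2 ∈ Set.Icc a b})
      = ∫⁻ x, volume ({y : ℝ | P (x, y)} ×ˢ Set.Icc a b) := by
        exact lintegral_congr fun x => by rw [hslice x]
    _ = ∫⁻ x, volume {y : ℝ | P (x, y)} * ENNReal.ofReal (b - a) := by
        refine lintegral_congr fun x => ?_
        rw [MeasureTheory.Measure.volume_eq_prod, Measure.prod_prod, Real.volume_Icc]
    _ = (∫⁻ x, volume {y : ℝ | P (x, y)}) * ENNReal.ofReal (b - a) := by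
        apply lintegral_mul_const
        exact measurable_measure_prodMk_left hP
    _ = volume {w : ℝ × ℝ | P w} * ENNReal.ofReal (b - a) := by
        rw [MeasureTheory.Measure.volume_eq_prod, Measure.prod_apply hP]
        rfl


lemma prodbd {y g B : ℝ} (hy1 : -B ≤ y) (hy2 : y ≤ B) (hg1 : -1 ≤ g) (hg2 : g ≤ 1) :
    -B ≤ y*g ∧ y*g ≤ B := by
  constructor <;>
    nlinarith [mul_nonneg (by linarith : (0:ℝ) ≤ B - y) (by linarith : (0:ℝ) ≤ 1 - g),
      mul_nonneg (by linarith : (0:ℝ) ≤ B + y) (by linarith : (0:ℝ) ≤ 1 + g),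
      mul_nonneg (by linarith : (0:ℝ) ≤ B - y) (by linarith : (0:ℝ) ≤ 1 + g),
      mul_nonneg (by linarith : (0:ℝ) ≤ B + y) (by linarith : (0:ℝ) ≤ 1 - g)]

lemma sqbd {y B : ℝ} (hy1 : -B ≤ y) (hy2 : y ≤ B) : y^2 ≤ B^2 := by nlinarith

lemma one_sub_cos_le_half_sq (s : ℝ) : 1 - Real.cos s ≤ s^2/2 := by
  have h1 := Real.sin_sq_eq_half_sub (s/2)
  rw [show 2*(s/2) = s by ring] at h1
  have h2 : Real.sin (s/2)^2 ≤ (s/2)^2 := Real.sin_sq_le_sq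
  linarith

/-! ### Example 1: large cylinders, giving `p ≤ q` -/

lemma example_one (p q : ℝ≥0∞) (hq : 1 ≤ q) (C : ℝ)
    (hbdd : ∀ f : ℝ × ℝ × ℝ → ℂ, MemLp f p volume → HeisRadial f →
      eLpNorm (heisMax f) q volume ≤ ENNReal.ofReal C * eLpNorm f p volume) :
    1/q.toReal ≤ 1/p.toReal := by
  have ha : 0 ≤ 1/p.toReal := by positivity
  have hb : 0 ≤ 1/q.toReal := by positivity
  have key : ∀ R : ℝ, (4:ℝ) ≤ R → 2*π * ((1/2) * R ^ ((3:ℕ):ℝ)) ^ (1/q.toReal)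
      ≤ (|C|+1) * (40 * R ^ ((3:ℕ):ℝ)) ^ (1/p.toReal) := by
    intro R hR
    have hR0 : (0:ℝ) < R := by linarith
    set E : Set (ℝ×ℝ×ℝ) := {v | v.1^2 + v.2.1^2 ≤ R^2 ∧ |v.2.2| ≤ 5*R} with hEdef
    have hE : MeasurableSet E := by
      rw [hEdef, Set.setOf_and]
      exact (measurableSet_le (by fun_prop) measurable_const).inter
        (measurableSet_le (by fun_prop) measurable_const)
    set G : Set (ℝ×ℝ×ℝ) :=
      Set.Icc (-(R/4)) (R/4) ×ˢ Set.Icc (-(R/4)) (R/4) ×ˢ Set.Icc (-R) R with hGdef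
    have hG : MeasurableSet G :=
      measurableSet_Icc.prod (measurableSet_Icc.prod measurableSet_Icc)
    have hrad : ∀ (α : ℝ) (x : ℝ × ℝ × ℝ),
        (Real.cos α * x.1 - Real.sin α * x.2.1,
         Real.sin α * x.1 + Real.cos α * x.2.1, x.2.2) ∈ E ↔ x ∈ E := by
      intro α x
      have hpy := Real.sin_sq_add_cos_sq α
      have hid : (Real.cos α * x.1 - Real.sin α * x.2.1)^2
          + (Real.sin α * x.1 + Real.cos α * x.2.1)^2 = x.1^2 + x.2.1^2 := by nlinarith [hpy]
      simp only [hEdef, Set.mem_setOf_eq]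
      rw [hid]
    have hEV : volume E ≤ ENNReal.ofReal (40 * R^3) := by
      have hsub : E ⊆ Set.Icc (-R) R ×ˢ Set.Icc (-R) R ×ˢ Set.Icc (-(5*R)) (5*R) := by
        rintro v ⟨hv1, hv2⟩
        have h1 : -R ≤ v.1 ∧ v.1 ≤ R :=
          abs_le_of_sq_le_sq' (by nlinarith [sq_nonneg v.2.1]) hR0.le
        have h2 : -R ≤ v.2.1 ∧ v.2.1 ≤ R :=
          abs_le_of_sq_le_sq' (by nlinarith [sq_nonneg v.1]) hR0.le
        have h3 := abs_le.mp hv2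
        simp only [Set.mem_prod, Set.mem_Icc]
        exact ⟨h1, h2, h3⟩
      calc volume E ≤ volume (Set.Icc (-R) R ×ˢ Set.Icc (-R) R ×ˢ Set.Icc (-(5*R)) (5*R)) :=
            measure_mono hsub
        _ = ENNReal.ofReal (40 * R^3) := by
            rw [vol_box, ← ENNReal.ofReal_mul (by linarith), ← ENNReal.ofReal_mul (by linarith)]
            congr 1
            ring
    have hGg : volume G = ENNReal.ofReal (R^3/2) := by
      rw [hGdef, vol_box, ← ENNReal.ofReal_mul (by linarith), ← ENNReal.ofReal_mul (by linarith)]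
      congr 1
      ring
    have hlow : ∀ x ∈ G, 2*π ≤ heisMax (E.indicator fun _ => (1:ℂ)) x := by
      intro x hx
      simp only [hGdef, Set.mem_prod, Set.mem_Icc] at hx
      obtain ⟨⟨h11, h12⟩, ⟨h21, h22⟩, h31, h32⟩ := hx
      have ht : (3/2:ℝ) ∈ Set.Ioo (1:ℝ) 2 := by norm_num
      refine le_trans ?_ (le_heisMax hE ht x)
      have hsub2 : Set.Ioc (0:ℝ) (2*π) ⊆ heisPt (3/2) x ⁻¹' E := by
        intro θ _
        have hpy := Real.sin_sq_add_cos_sq θ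
        have hc1 := Real.neg_one_le_cos θ
        have hc2 := Real.cos_le_one θ
        have hs1 := Real.neg_one_le_sin θ
        have hs2 := Real.sin_le_one θ
        obtain ⟨pc1a, pc1b⟩ := prodbd h11 h12 hc1 hc2
        obtain ⟨ps1a, ps1b⟩ := prodbd h11 h12 hs1 hs2
        obtain ⟨pc2a, pc2b⟩ := prodbd h21 h22 hc1 hc2
        obtain ⟨ps2a, ps2b⟩ := prodbd h21 h22 hs1 hs2
        have q1 := sqbd h11 h12
        have q2 := sqbd h21 h22
        have hR2 : 0 ≤ (R - 4) * R := mul_nonneg (by linarith) (by linarith)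
        simp only [Set.mem_preimage, heisPt, hEdef, Set.mem_setOf_eq]
        constructor
        · nlinarith [hpy, pc1a, ps2a, q1, q2, hR2, hR]
        · rw [abs_le]
          constructor <;> nlinarith [ps1a, ps1b, pc2a, pc2b, hR]
      rw [Set.inter_eq_self_of_subset_left hsub2, Real.volume_Ioc, sub_zero,
        ENNReal.toReal_ofReal (by positivity)]
    have hmain := core_ineq p q hq C hbdd E G hE hG hrad (40 * R^3) (R^3/2) (2*π)
      (by positivity) (by positivity) (by positivity) hEV hGg hlow
    have h3R : R ^ ((3:ℕ):ℝ) = R^(3:ℕ) := Real.rpow_natCast R 3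
    rw [h3R, show ((1:ℝ)/2) * R^(3:ℕ) = R^3/2 by ring]
    exact hmain
  have := exp_large (c := 2*π) (k1 := 1/2) (k2 := 40) (C' := |C|+1)
    (a := 1/p.toReal) (b := 1/q.toReal) (u := ((3:ℕ):ℝ)) (v := ((3:ℕ):ℝ)) (R0 := 4)
    (by positivity) (by norm_num) (by norm_num) (by positivity) ha hb (by norm_num) key
  have h3 : ((3:ℕ):ℝ) = 3 := by norm_num
  rw [h3] at this
  linarith

end

/-! ### Example 3: thin annuli, giving `2/p ≤ 3/q` -/

lemma example_three (p q : ℝ≥0∞) (hq : 1 ≤ q) (C : ℝ)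
    (hbdd : ∀ f : ℝ × ℝ × ℝ → ℂ, MemLp f p volume → HeisRadial f →
      eLpNorm (heisMax f) q volume ≤ ENNReal.ofReal C * eLpNorm f p volume) :
    2*(1/p.toReal) ≤ 3*(1/q.toReal) := by
  have ha : 0 ≤ 1/p.toReal := by positivity
  have hb : 0 ≤ 1/q.toReal := by positivity
  have key : ∀ δ : ℝ, 0 < δ → δ ≤ 1/10 →
      2*π * δ ^ (0:ℝ) * ((1/2) * δ ^ ((3:ℕ):ℝ)) ^ (1/q.toReal)
      ≤ (|C|+1) * ((36*π) * δ ^ ((2:ℕ):ℝ)) ^ (1/p.toReal) := by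
    intro δ hδ hδ1
    set P : ℝ × ℝ → Prop :=
      fun w => (3/2-δ)^2 ≤ w.1^2 + w.2^2 ∧ w.1^2 + w.2^2 ≤ (3/2+δ)^2 with hPdef
    have hP : MeasurableSet {w : ℝ × ℝ | P w} := by
      rw [hPdef, Set.setOf_and]
      exact (measurableSet_le measurable_const (by fun_prop)).inter
        (measurableSet_le (by fun_prop) measurable_const)
    set E : Set (ℝ×ℝ×ℝ) :=
      {v | P (v.1, v.2.1) ∧ v.2.2 ∈ Set.Icc (-(3*δ)) (3*δ)} with hEdef
    have hE : MeasurableSet E := by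
      rw [hEdef]
      exact (hP.preimage (by fun_prop)).inter (measurableSet_Icc.preimage (by fun_prop))
    set G : Set (ℝ×ℝ×ℝ) :=
      Set.Icc (-(δ/4)) (δ/4) ×ˢ Set.Icc (-(δ/4)) (δ/4) ×ˢ Set.Icc (-δ) δ with hGdef
    have hG : MeasurableSet G :=
      measurableSet_Icc.prod (measurableSet_Icc.prod measurableSet_Icc)
    have hrad : ∀ (α : ℝ) (x : ℝ × ℝ × ℝ),
        (Real.cos α * x.1 - Real.sin α * x.2.1,
         Real.sin α * x.1 + Real.cos α * x.2.1, x.2.2) ∈ E ↔ x ∈ E := by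
      intro α x
      have hpy := Real.sin_sq_add_cos_sq α
      have hid : (Real.cos α * x.1 - Real.sin α * x.2.1)^2
          + (Real.sin α * x.1 + Real.cos α * x.2.1)^2 = x.1^2 + x.2.1^2 := by nlinarith [hpy]
      simp only [hEdef, hPdef, Set.mem_setOf_eq]
      rw [hid]
    have hEV : volume E ≤ ENNReal.ofReal (36*π*δ^2) := by
      have h1 : volume E = volume {w : ℝ × ℝ | P w} * ENNReal.ofReal (3*δ - -(3*δ)) :=
        vol_cond_prod hP (-(3*δ)) (3*δ)
      rw [h1]
      have h2 : volume {w : ℝ × ℝ | P w}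
          ≤ ENNReal.ofReal (π * ((3/2+δ)^2 - (3/2-δ)^2)) := by
        rw [hPdef]
        exact annulus_vol (by linarith) (by linarith)
      calc volume {w : ℝ × ℝ | P w} * ENNReal.ofReal (3*δ - -(3*δ))
          ≤ ENNReal.ofReal (π * ((3/2+δ)^2 - (3/2-δ)^2)) * ENNReal.ofReal (3*δ - -(3*δ)) :=
            mul_le_mul' h2 le_rfl
        _ = ENNReal.ofReal (36*π*δ^2) := by
            rw [← ENNReal.ofReal_mul (mul_nonneg Real.pi_pos.le
              (by nlinarith : (0:ℝ) ≤ (3/2+δ)^2 - (3/2-δ)^2))]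
            congr 1
            ring
    have hGg : volume G = ENNReal.ofReal (δ^3/2) := by
      rw [hGdef, vol_box, ← ENNReal.ofReal_mul (by linarith), ← ENNReal.ofReal_mul (by linarith)]
      congr 1
      ring
    have hlow : ∀ x ∈ G, 2*π ≤ heisMax (E.indicator fun _ => (1:ℂ)) x := by
      intro x hx
      simp only [hGdef, Set.mem_prod, Set.mem_Icc] at hx
      obtain ⟨⟨h11, h12⟩, ⟨h21, h22⟩, h31, h32⟩ := hx
      have ht : (3/2:ℝ) ∈ Set.Ioo (1:ℝ) 2 := by norm_num
      refine le_trans ?_ (le_heisMax hE ht x)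
      have hsub2 : Set.Ioc (0:ℝ) (2*π) ⊆ heisPt (3/2) x ⁻¹' E := by
        intro θ _
        have hpy := Real.sin_sq_add_cos_sq θ
        have hc1 := Real.neg_one_le_cos θ
        have hc2 := Real.cos_le_one θ
        have hs1 := Real.neg_one_le_sin θ
        have hs2 := Real.sin_le_one θ
        obtain ⟨pc1a, pc1b⟩ := prodbd h11 h12 hc1 hc2
        obtain ⟨ps1a, ps1b⟩ := prodbd h11 h12 hs1 hs2
        obtain ⟨pc2a, pc2b⟩ := prodbd h21 h22 hc1 hc2
        obtain ⟨ps2a, ps2b⟩ := prodbd h21 h22 hs1 hs2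
        have q1 := sqbd h11 h12
        have q2 := sqbd h21 h22
        have hδ2 : 0 ≤ δ^2 := sq_nonneg δ
        have hδδ : δ^2 ≤ δ * (1/10) := by nlinarith [hδ, hδ1]
        simp only [Set.mem_preimage, heisPt, hEdef, hPdef, Set.mem_setOf_eq, Set.mem_Icc]
        refine ⟨⟨?_, ?_⟩, ?_, ?_⟩
        · nlinarith [hpy, pc1b, ps2b, sq_nonneg x.1, sq_nonneg x.2.1, hδ, hδδ]
        · nlinarith [hpy, pc1a, ps2a, q1, q2, hδ, hδδ]
        · nlinarith [ps1a, ps1b, pc2a, pc2b, hδ]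
        · nlinarith [ps1a, ps1b, pc2a, pc2b, hδ]
      rw [Set.inter_eq_self_of_subset_left hsub2, Real.volume_Ioc, sub_zero,
        ENNReal.toReal_ofReal (by positivity)]
    have hmain := core_ineq p q hq C hbdd E G hE hG hrad (36*π*δ^2) (δ^3/2) (2*π)
      (by positivity) (by positivity) (by positivity) hEV hGg hlow
    rw [Real.rpow_zero, mul_one, Real.rpow_natCast, Real.rpow_natCast,
      show ((1:ℝ)/2) * δ^(3:ℕ) = δ^3/2 by ring, show ((36:ℝ)*π) * δ^(2:ℕ) = 36*π*δ^2 by ring]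
    exact hmain
  have := exp_small (c := 2*π) (k1 := 1/2) (k2 := 36*π) (C' := |C|+1)
    (a := 1/p.toReal) (b := 1/q.toReal) (w := 0) (u := ((3:ℕ):ℝ)) (v := ((2:ℕ):ℝ)) (d0 := 1/10)
    (by positivity) (by norm_num) (by positivity) (by positivity) ha hb (by norm_num) key
  push_cast at this
  linarith

/-! ### Example 2: focusing example, giving `3/p ≤ 1 + 1/q` -/

lemma example_two (p q : ℝ≥0∞) (hq : 1 ≤ q) (C : ℝ)
    (hbdd : ∀ f : ℝ × ℝ × ℝ → ℂ, MemLp f p volume → HeisRadial f →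
      eLpNorm (heisMax f) q volume ≤ ENNReal.ofReal C * eLpNorm f p volume) :
    3*(1/p.toReal) ≤ 1 + 1/q.toReal := by
  have ha : 0 ≤ 1/p.toReal := by positivity
  have hb : 0 ≤ 1/q.toReal := by positivity
  have key : ∀ δ : ℝ, 0 < δ → δ ≤ 1/10 →
      (1/4) * δ ^ (1:ℝ) * ((48/25) * δ ^ (1:ℝ)) ^ (1/q.toReal)
      ≤ (|C|+1) * (80 * δ ^ ((3:ℕ):ℝ)) ^ (1/p.toReal) := by
    intro δ hδ hδ1
    set E : Set (ℝ×ℝ×ℝ) := {v | v.1^2 + v.2.1^2 ≤ δ^2 ∧ |v.2.2| ≤ 10*δ} with hEdef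
    have hE : MeasurableSet E := by
      rw [hEdef, Set.setOf_and]
      exact (measurableSet_le (by fun_prop) measurable_const).inter
        (measurableSet_le (by fun_prop) measurable_const)
    set G : Set (ℝ×ℝ×ℝ) :=
      Set.Icc (-(9/5):ℝ) (-(6/5)) ×ˢ Set.Icc (-(1/10):ℝ) (1/10) ×ˢ Set.Icc (-(8*δ)) (8*δ)
      with hGdef
    have hG : MeasurableSet G :=
      measurableSet_Icc.prod (measurableSet_Icc.prod measurableSet_Icc)
    have hrad : ∀ (α : ℝ) (x : ℝ × ℝ × ℝ),
        (Real.cos α * x.1 - Real.sin α * x.2.1,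
         Real.sin α * x.1 + Real.cos α * x.2.1, x.2.2) ∈ E ↔ x ∈ E := by
      intro α x
      have hpy := Real.sin_sq_add_cos_sq α
      have hid : (Real.cos α * x.1 - Real.sin α * x.2.1)^2
          + (Real.sin α * x.1 + Real.cos α * x.2.1)^2 = x.1^2 + x.2.1^2 := by nlinarith [hpy]
      simp only [hEdef, Set.mem_setOf_eq]
      rw [hid]
    have hEV : volume E ≤ ENNReal.ofReal (80 * δ^3) := by
      have hsub : E ⊆ Set.Icc (-δ) δ ×ˢ Set.Icc (-δ) δ ×ˢ Set.Icc (-(10*δ)) (10*δ) := by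
        rintro v ⟨hv1, hv2⟩
        have h1 : -δ ≤ v.1 ∧ v.1 ≤ δ :=
          abs_le_of_sq_le_sq' (by nlinarith [sq_nonneg v.2.1]) hδ.le
        have h2 : -δ ≤ v.2.1 ∧ v.2.1 ≤ δ :=
          abs_le_of_sq_le_sq' (by nlinarith [sq_nonneg v.1]) hδ.le
        have h3 := abs_le.mp hv2
        simp only [Set.mem_prod, Set.mem_Icc]
        exact ⟨h1, h2, h3⟩
      calc volume E ≤ volume (Set.Icc (-δ) δ ×ˢ Set.Icc (-δ) δ ×ˢ Set.Icc (-(10*δ)) (10*δ)) :=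
            measure_mono hsub
        _ = ENNReal.ofReal (80 * δ^3) := by
            rw [vol_box, ← ENNReal.ofReal_mul (by linarith), ← ENNReal.ofReal_mul (by linarith)]
            congr 1
            ring
    have hGg : volume G = ENNReal.ofReal (48*δ/25) := by
      rw [hGdef, vol_box, ← ENNReal.ofReal_mul (by norm_num), ← ENNReal.ofReal_mul (by norm_num)]
      congr 1
      ring
    have hlow : ∀ x ∈ G, δ/4 ≤ heisMax (E.indicator fun _ => (1:ℂ)) x := by
      intro x hx
      simp only [hGdef, Set.mem_prod, Set.mem_Icc] at hx
      obtain ⟨⟨h11, h12⟩, ⟨h21, h22⟩, h31, h32⟩ := hx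
      set s2 := x.1^2 + x.2.1^2 with hs2def
      have hs2l : (36/25:ℝ) ≤ s2 := by nlinarith [sq_nonneg (x.1 + 6/5), sq_nonneg x.2.1]
      have hs2u : s2 ≤ (13/4:ℝ) := by
        have hm1 : (0:ℝ) ≤ (x.1 + 9/5) * (-(6/5) - x.1) := by
          apply mul_nonneg <;> linarith
        have hm2 : (0:ℝ) ≤ (1/10 - x.2.1) * (1/10 + x.2.1) := by
          apply mul_nonneg <;> linarith
        nlinarith [hm1, hm2]
      set t := Real.sqrt s2 with htdef
      have hts : t^2 = s2 := Real.sq_sqrt (by nlinarith)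
      have ht0 : 0 < t := Real.sqrt_pos.mpr (by nlinarith)
      have ht1 : 6/5 ≤ t := by nlinarith [hts, ht0]
      have ht2 : t ≤ 19/10 := by nlinarith [hts, ht0]
      have ht : t ∈ Set.Ioo (1:ℝ) 2 := ⟨by linarith, by linarith⟩
      have htne : t ≠ 0 := ht0.ne'
      have hx2t1 : -1 ≤ x.2.1 / t := by
        rw [neg_le, ← neg_div, div_le_one ht0]
        linarith
      have hx2t2 : x.2.1 / t ≤ 1 := by
        rw [div_le_one ht0]
        linarith
      set θ0 := π - Real.arcsin (x.2.1 / t) with hθ0def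
      have hsinθ0 : Real.sin θ0 = x.2.1 / t := by
        rw [hθ0def, Real.sin_pi_sub, Real.sin_arcsin hx2t1 hx2t2]
      have hcosθ0 : Real.cos θ0 = x.1 / t := by
        rw [hθ0def, Real.cos_pi_sub, Real.cos_arcsin]
        have h1 : 1 - (x.2.1/t)^2 = (x.1/t)^2 := by
          field_simp
          linarith [hts]
        rw [h1, Real.sqrt_sq_eq_abs, abs_of_neg (div_neg_of_neg_of_pos (by linarith) ht0)]
        ring
      have hx1eq : x.1 = t * Real.cos θ0 := by
        rw [hcosθ0]
        field_simp
      have hx2eq : x.2.1 = t * Real.sin θ0 := by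
        rw [hsinθ0]
        field_simp
      have harcsin1 := Real.arcsin_le_pi_div_two (x.2.1 / t)
      have harcsin2 := Real.neg_pi_div_two_le_arcsin (x.2.1 / t)
      have hθ0b1 : π/2 ≤ θ0 := by rw [hθ0def]; linarith
      have hθ0b2 : θ0 ≤ 3*π/2 := by rw [hθ0def]; linarith
      refine le_trans ?_ (le_heisMax hE ht x)
      have hpig := Real.pi_gt_three
      have harc : Set.Icc (θ0 - δ/8) (θ0 + δ/8) ⊆ Set.Ioc (0:ℝ) (2*π) ∩ heisPt t x ⁻¹' E := by
        intro θ hθ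
        obtain ⟨hθl, hθr⟩ := Set.mem_Icc.mp hθ
        have hs : |θ - θ0| ≤ δ/8 := abs_le.mpr ⟨by linarith, by linarith⟩
        set s := θ - θ0 with hsdef
        have hθeq : θ = θ0 + s := by rw [hsdef]; ring
        have hpy0 := Real.sin_sq_add_cos_sq θ0
        have hpys := Real.sin_sq_add_cos_sq s
        constructor
        · constructor
          · linarith
          · linarith
        · have hexp : (x.1 - t*Real.cos θ)^2 + (x.2.1 - t*Real.sin θ)^2
              = 2*t^2*(1 - Real.cos s) := by
            rw [hx1eq, hx2eq, hθeq, Real.cos_add, Real.sin_add]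
            linear_combination (t^2*((1 - Real.cos s)^2 + Real.sin s^2)) * hpy0 + t^2 * hpys
          have hcos_b : 1 - Real.cos s ≤ s^2/2 := one_sub_cos_le_half_sq s
          have ht4 : t^2 ≤ 4 := by
            linarith [mul_nonneg (by linarith : (0:ℝ) ≤ 19/10 - t) ht0.le]
          have hsb := abs_le.mp hs
          have hs2b : s^2 ≤ (δ/8)^2 := sqbd hsb.1 hsb.2
          have hcosle := Real.cos_le_one s
          simp only [Set.mem_preimage, heisPt, hEdef, Set.mem_setOf_eq]
          constructor
          · rw [hexp]
            linarith [mul_nonneg (by linarith : (0:ℝ) ≤ 4 - t^2)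
              (by linarith : (0:ℝ) ≤ 1 - Real.cos s), hcos_b, hs2b, sq_nonneg δ]
          · have hinner : x.1*(-Real.sin θ) + x.2.1*Real.cos θ = -(t * Real.sin s) := by
              rw [hx1eq, hx2eq, hθeq, Real.sin_add, Real.cos_add]
              linear_combination (-(t*Real.sin s)) * hpy0
            rw [hinner]
            have hsinsb : |Real.sin s| ≤ δ/8 := le_trans Real.abs_sin_le_abs hs
            have habs2 : |t^2 * Real.sin s| ≤ 4*(δ/8) := by
              rw [abs_mul, abs_of_nonneg (sq_nonneg t)]
              exact mul_le_mul ht4 hsinsb (abs_nonneg _) (by norm_num)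
            have h2' := abs_le.mp habs2
            rw [abs_le]
            constructor <;> linarith [h31, h32, h2'.1, h2'.2]
      calc δ/4 = (ENNReal.ofReal (δ/4)).toReal := (ENNReal.toReal_ofReal (by positivity)).symm
        _ ≤ (volume (Set.Ioc (0:ℝ) (2*π) ∩ heisPt t x ⁻¹' E)).toReal := by
            apply ENNReal.toReal_mono
            · exact ne_top_of_le_ne_top
                (by rw [Real.volume_Ioc]; exact ENNReal.ofReal_ne_top)
                (measure_mono Set.inter_subset_left)
            · calc ENNReal.ofReal (δ/4)
                  = volume (Set.Icc (θ0 - δ/8) (θ0 + δ/8)) := by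
                    rw [Real.volume_Icc]
                    congr 1
                    ring
                _ ≤ _ := measure_mono harc
    have hmain := core_ineq p q hq C hbdd E G hE hG hrad (80 * δ^3) (48*δ/25) (δ/4)
      (by positivity) (by positivity) (by positivity) hEV hGg hlow
    rw [Real.rpow_one, Real.rpow_natCast,
      show ((1:ℝ)/4) * δ = δ/4 by ring, show ((48:ℝ)/25) * δ = 48*δ/25 by ring]
    exact hmain
  have := exp_small (c := 1/4) (k1 := 48/25) (k2 := 80) (C' := |C|+1)
    (a := 1/p.toReal) (b := 1/q.toReal) (w := 1) (u := 1) (v := ((3:ℕ):ℝ)) (d0 := 1/10)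
    (by norm_num) (by norm_num) (by norm_num) (by positivity) ha hb (by norm_num)
    (by intro δ h1 h2; have := key δ h1 h2; rwa [Real.rpow_one] at this ⊢)
  push_cast at this
  linarith

/-! ### Main theorem -/

theorem necessity_heisenberg_radial_maximal
    (p q : ℝ≥0∞) (hp : 1 ≤ p) (hq : 1 ≤ q) (C : ℝ)
    (hbdd : ∀ f : ℝ × ℝ × ℝ → ℂ, MemLp f p volume → HeisRadial f →
      eLpNorm (heisMax f) q volume ≤ ENNReal.ofReal C * eLpNorm f p volume) :
    p ≤ q ∧ 3/p ≤ 1 + 1/q ∧ 2/p ≤ 3/q := by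
  have hA := example_one p q hq C hbdd
  have hB := example_two p q hq C hbdd
  have hC3 := example_three p q hq C hbdd
  have hp0 : p ≠ 0 := (lt_of_lt_of_le zero_lt_one hp).ne'
  have hq0 : q ≠ 0 := (lt_of_lt_of_le zero_lt_one hq).ne'
  refine ⟨?_, ?_, ?_⟩
  · rw [← ENNReal.inv_le_inv]
    apply (ENNReal.toReal_le_toReal (ENNReal.inv_ne_top.mpr hq0) (ENNReal.inv_ne_top.mpr hp0)).mp
    rw [ENNReal.toReal_inv, ENNReal.toReal_inv]
    simpa [one_div] using hA
  · have h1 : (3:ℝ≥0∞)/p ≠ ∞ := (ENNReal.div_lt_top (by simp) hp0).ne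
    have h2 : (1:ℝ≥0∞) + 1/q ≠ ∞ := by
      rw [ENNReal.add_ne_top]
      exact ⟨ENNReal.one_ne_top, (ENNReal.div_lt_top ENNReal.one_ne_top hq0).ne⟩
    apply (ENNReal.toReal_le_toReal h1 h2).mp
    rw [ENNReal.toReal_div, ENNReal.toReal_add ENNReal.one_ne_top
      (ENNReal.div_lt_top ENNReal.one_ne_top hq0).ne, ENNReal.toReal_div]
    simp only [ENNReal.toReal_ofNat, ENNReal.toReal_one]
    have e1 : (3:ℝ) / p.toReal = 3 * (1/p.toReal) := by ring
    have e2 : (1:ℝ) / q.toReal = 1/q.toReal := rfl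
    rw [e1]
    linarith [hB]
  · have h1 : (2:ℝ≥0∞)/p ≠ ∞ := (ENNReal.div_lt_top (by simp) hp0).ne
    have h2 : (3:ℝ≥0∞)/q ≠ ∞ := (ENNReal.div_lt_top (by simp) hq0).ne
    apply (ENNReal.toReal_le_toReal h1 h2).mp
    rw [ENNReal.toReal_div, ENNReal.toReal_div]
    simp only [ENNReal.toReal_ofNat]
    have e1 : (2:ℝ) / p.toReal = 2 * (1/p.toReal) := by ring
    have e2 : (3:ℝ) / q.toReal = 3 * (1/q.toReal) := by ring
    rw [e1, e2]
    exact hC3
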